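/- Let Γ be a 1-patch nonorientable Tait-colored cubic graph other than the theta graph. Then Γ admits a c-compression (compression along an orientation-reversing edge) whose result is either a nonorientable graph or the theta graph. -/

import Mathlib

/-- A Tait-colored cubic graph (multigraphs allowed), encoded by three
fixed-point-free involutions on the vertex set, one for each color `c : Fin 3`:
`mat c` matches every vertex to the other endpoint of its unique edge of color `c`. -/
structure TaitGraph (V : Type) where
  mat : Fin 3 → V → V
  invol : ∀ c v, mat c (mat c v) = v
  nofix : ∀ c v, mat c v ≠ v

namespace TaitGraph

variable {V V' : Type}

/-- Two vertices lie on the same bi-colored cycle of the two colors other than `c`. -/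
def Conn (Γ : TaitGraph V) (c : Fin 3) : V → V → Prop :=
  Relation.ReflTransGen (fun x y => ∃ c', c' ≠ c ∧ Γ.mat c' x = y)

/-- The patch number for the pair of colors other than `c`: the number of
bi-colored cycles of those two colors. -/
noncomputable def patches (Γ : TaitGraph V) (c : Fin 3) : ℕ :=
  Nat.card (Quot (Γ.Conn c))

def OnePatch (Γ : TaitGraph V) : Prop := ∀ c, Γ.patches c = 1

def Bipartite (Γ : TaitGraph V) : Prop :=
  ∃ s : V → Bool, ∀ c v, s (Γ.mat c v) = !s v

def Connected (Γ : TaitGraph V) : Prop :=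
  Nonempty V ∧ ∀ x y : V, Relation.ReflTransGen (fun a b => ∃ c, Γ.mat c a = b) x y

/-- The number of edges: for each color, the edges of that color are the orbits
of the corresponding involution. -/
noncomputable def edgeCount (Γ : TaitGraph V) : ℕ :=
  ∑ c : Fin 3, Nat.card (Quot (fun x y : V => Γ.mat c x = y))

/-- Euler characteristic of the induced surface, computed from its CW structure:
vertices minus edges plus 2-cells (one 2-cell per bi-colored cycle). -/
noncomputable def chiS (Γ : TaitGraph V) : ℤ :=
  (Nat.card V : ℤ) - (Γ.edgeCount : ℤ) + (∑ c : Fin 3, (Γ.patches c : ℤ))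

/-- The edge of color `c` at `v` is orientation-reversing: its endpoints lie on the same
bi-colored cycle of the other two colors and receive the same sign in any alternating
`±`-labeling of the bi-colored cycles. -/
def OrientationReversing (Γ : TaitGraph V) (c : Fin 3) (v : V) : Prop :=
  Γ.Conn c v (Γ.mat c v) ∧
    ∀ s : V → Bool, (∀ c' v', c' ≠ c → s (Γ.mat c' v') = !s v') → s (Γ.mat c v) = s v

/-- The edge of color `c` at `v` is orientation-preserving: its endpoints lie on the same
bi-colored cycle of the other two colors and receive opposite signs in any alternating
`±`-labeling of the bi-colored cycles. -/
def OrientationPreserving (Γ : TaitGraph V) (c : Fin 3) (v : V) : Prop :=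
  Γ.Conn c v (Γ.mat c v) ∧
    ∀ s : V → Bool, (∀ c' v', c' ≠ c → s (Γ.mat c' v') = !s v') → s (Γ.mat c v) = !s v

/-- `Γ'` is the compression of `Γ` along the (non-parallel) edge of color `c` with
endpoints `v` and `Γ.mat c v`: delete the edge and its endpoints, and for each of the
other two colors merge the two deleted-vertex edges into a single edge. -/
def IsCompression (Γ : TaitGraph V) (c : Fin 3) (v : V) (Γ' : TaitGraph V') : Prop :=
  ∃ φ : V' ≃ {w : V // w ≠ v ∧ w ≠ Γ.mat c v},
    (∀ w : V', ((φ (Γ'.mat c w) : V)) = Γ.mat c ((φ w : V))) ∧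
    ∀ c' : Fin 3, c' ≠ c → ∀ w : V',
      (Γ.mat c' ((φ w : V)) = v ∧ ((φ (Γ'.mat c' w) : V)) = Γ.mat c' (Γ.mat c v)) ∨
      (Γ.mat c' ((φ w : V)) = Γ.mat c v ∧ ((φ (Γ'.mat c' w) : V)) = Γ.mat c' v) ∨
      (Γ.mat c' ((φ w : V)) ≠ v ∧ Γ.mat c' ((φ w : V)) ≠ Γ.mat c v ∧
        ((φ (Γ'.mat c' w) : V)) = Γ.mat c' ((φ w : V)))

end TaitGraph

/-- Bundled finite Tait-colored cubic graphs. -/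
def TG : Type := Σ n : ℕ, TaitGraph (Fin n)

/-- `Y` is obtained from `X` by a p-compression: compression along a connecting edge
(one whose endpoints lie on distinct bi-colored cycles of the opposite two colors). -/
def PComp (X Y : TG) : Prop :=
  ∃ (c : Fin 3) (v : Fin X.1),
    ¬ X.2.Conn c v (X.2.mat c v) ∧ X.2.IsCompression c v Y.2

/-- `Y` is obtained from `X` by a t-compression: compression along a non-parallel
orientation-preserving edge. -/
def TComp (X Y : TG) : Prop :=
  ∃ (c : Fin 3) (v : Fin X.1),
    X.2.OrientationPreserving c v ∧
    (∀ c' : Fin 3, c' ≠ c → X.2.mat c' v ≠ X.2.mat c v) ∧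
    X.2.IsCompression c v Y.2

/-- `Y` is obtained from `X` by a c-compression: compression along an
orientation-reversing edge. -/
def CComp (X Y : TG) : Prop :=
  ∃ (c : Fin 3) (v : Fin X.1),
    X.2.OrientationReversing c v ∧ X.2.IsCompression c v Y.2

/-- The theta graph: two vertices joined by three edges, one of each color.  (Any
Tait-colored cubic graph on two vertices is the theta graph.) -/
def IsTheta (X : TG) : Prop := X.1 = 2

section Aux
open TaitGraph

variable {V : Type}

lemma fin3_cases (a b c x : Fin 3) (hac : a ≠ c) (hbc : b ≠ c) (hab : a ≠ b) (hx : x ≠ c) :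
    x = a ∨ x = b := by revert a b c x; decide

lemma decide_parity_flip {p q : ℤ} (h : (p + q) % 2 = 1) :
    (decide (q % 2 = 0)) = !(decide (p % 2 = 0)) := by
  by_cases h0 : p % 2 = 0 <;> by_cases h1 : q % 2 = 0 <;> simp [h0, h1] <;> omega

lemma decide_parity_eq {p q : ℤ} (h : (p + q) % 2 = 0) :
    (decide (q % 2 = 0)) = (decide (p % 2 = 0)) := by
  by_cases h0 : p % 2 = 0 <;> by_cases h1 : q % 2 = 0 <;> simp [h0, h1] <;> omega

lemma TaitGraph.matInj (Γ : TaitGraph V) (c : Fin 3) {x y : V}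
    (h : Γ.mat c x = Γ.mat c y) : x = y := by
  have := Γ.invol c x; rw [h, Γ.invol] at this; exact this.symm

/-- In a graph all of whose patch numbers are 1, any two vertices lie on a common
bicolored cycle for each pair of colors. -/
lemma conn_total (Γ : TaitGraph V) (hone : Γ.OnePatch) (c : Fin 3) (x y : V) :
    Γ.Conn c x y := by
  have hsym : Symmetric (fun x y : V => ∃ c', c' ≠ c ∧ Γ.mat c' x = y) := by
    rintro a b ⟨c', hc', h⟩; exact ⟨c', hc', by rw [← h, Γ.invol]⟩
  have hequiv : Equivalence (Γ.Conn c) :=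
    ⟨fun _ => Relation.ReflTransGen.refl,
     fun h => by
       letI : Std.Symm (fun x y : V => ∃ c', c' ≠ c ∧ Γ.mat c' x = y) := ⟨fun _ _ h' => hsym h'⟩
       exact Std.Symm.symm (r := Relation.ReflTransGen (fun x y : V => ∃ c', c' ≠ c ∧ Γ.mat c' x = y)) _ _ h,
     fun h1 h2 => Relation.ReflTransGen.trans h1 h2⟩
  have h1 : Nat.card (Quot (Γ.Conn c)) = 1 := hone c
  rw [Nat.card_eq_one_iff_unique] at h1
  have : Quot.mk (Γ.Conn c) x = Quot.mk (Γ.Conn c) y := h1.1.allEq _ _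
  rw [Quot.eq] at this
  exact (hequiv.eqvGen_iff).1 this

lemma nonempty_of_onePatch (Γ : TaitGraph V) (hone : Γ.OnePatch) : Nonempty V := by
  have h1 : Nat.card (Quot (Γ.Conn 0)) = 1 := hone 0
  rw [Nat.card_eq_one_iff_unique] at h1
  obtain ⟨q⟩ := h1.2
  induction q using Quot.ind with
  | _ v => exact ⟨v⟩

lemma even_card_of_involution (g : ℤ → ℤ) :
    ∀ (s : Finset ℤ), (∀ x ∈ s, g x ∈ s) → (∀ x ∈ s, g (g x) = x) → (∀ x ∈ s, g x ≠ x) →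
    Even s.card := by
  intro s
  induction s using Finset.strongInduction with
  | _ s ih =>
    intro h1 h2 h3
    rcases s.eq_empty_or_nonempty with rfl | ⟨x, hx⟩
    · simp
    · have hgx := h1 x hx
      have hne := h3 x hx
      set s' := (s.erase x).erase (g x) with hs'
      have hgxe : g x ∈ s.erase x := Finset.mem_erase.2 ⟨hne, hgx⟩
      have hsub : s' ⊆ s := fun y hy => Finset.mem_of_mem_erase (Finset.mem_of_mem_erase hy)
      have hmem : ∀ y, y ∈ s' ↔ y ∈ s ∧ y ≠ x ∧ y ≠ g x := by
        intro y
        simp only [hs', Finset.mem_erase]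
        tauto
      have hss : s' ⊂ s := Finset.ssubset_of_ssubset_of_subset
        (Finset.erase_ssubset hgxe) (Finset.erase_subset _ _)
      have hcard : s.card = s'.card + 2 := by
        have c1 : (s.erase x).card = s.card - 1 := Finset.card_erase_of_mem hx
        have c2 : s'.card = (s.erase x).card - 1 := Finset.card_erase_of_mem hgxe
        have : 1 ≤ (s.erase x).card := Finset.card_pos.2 ⟨g x, hgxe⟩
        have : 1 ≤ s.card := Finset.card_pos.2 ⟨x, hx⟩
        omega
      have hrec : Even s'.card := by
        apply ih s' hss
        · intro y hy
          rw [hmem] at hy ⊢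
          obtain ⟨hys, hyx, hygx⟩ := hy
          refine ⟨h1 y hys, ?_, ?_⟩
          · intro h; apply hygx; rw [← h2 y hys, h]
          · intro h; exact hyx (h2 x hx ▸ congrArg g h ▸ (h2 y hys).symm)
        · intro y hy; exact h2 y (hsub hy)
        · intro y hy; exact h3 y (hsub hy)
      rw [hcard]; exact hrec.add even_two
  end Aux
section CoordSec
open TaitGraph

variable {V : Type}

/-- A coordinatization of the bicolored cycle of the two colors other than `c₀`:
`f` enumerates the vertices around the cycle with period `n`, where edges of color
`a` join positions `2i ↔ 2i+1` and edges of color `b` join positions `2i+1 ↔ 2i+2`. -/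
structure Coord (Γ : TaitGraph V) (c₀ : Fin 3) (n : ℤ) where
  a : Fin 3
  b : Fin 3
  ha : a ≠ c₀
  hb : b ≠ c₀
  hab : a ≠ b
  hn : 2 ≤ n
  heven : n % 2 = 0
  f : ℤ → V
  periodic : ∀ k, f (k + n) = f k
  inj : ∀ j k, 0 ≤ j → j < n → 0 ≤ k → k < n → f j = f k → j = k
  surj : ∀ v, ∃ k, 0 ≤ k ∧ k < n ∧ f k = v
  stepA : ∀ k, k % 2 = 0 → Γ.mat a (f k) = f (k + 1)
  stepB : ∀ k, k % 2 = 1 → Γ.mat b (f k) = f (k + 1)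

namespace Coord

variable {Γ : TaitGraph V} {c₀ : Fin 3} {n : ℤ} (C : Coord Γ c₀ n)

lemma periodic' (k : ℤ) : C.f (k - n) = C.f k := by
  have := C.periodic (k - n); rw [show k - n + n = k by ring] at this; exact this.symm

/-- The position of a vertex: the unique index in `[0, n)`. -/
noncomputable def pos (v : V) : ℤ := (C.surj v).choose

lemma pos_nonneg (v : V) : 0 ≤ C.pos v := (C.surj v).choose_spec.1
lemma pos_lt (v : V) : C.pos v < n := (C.surj v).choose_spec.2.1
lemma f_pos (v : V) : C.f (C.pos v) = v := (C.surj v).choose_spec.2.2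

lemma posf (k : ℤ) (h0 : 0 ≤ k) (h1 : k < n) : C.pos (C.f k) = k :=
  C.inj _ _ (C.pos_nonneg _) (C.pos_lt _) h0 h1 (C.f_pos _)

/-- The chord map in coordinates. -/
noncomputable def γ (k : ℤ) : ℤ := C.pos (Γ.mat c₀ (C.f k))

lemma γ_spec (k : ℤ) : Γ.mat c₀ (C.f k) = C.f (C.γ k) := (C.f_pos _).symm
lemma γ_nonneg (k : ℤ) : 0 ≤ C.γ k := C.pos_nonneg _
lemma γ_lt (k : ℤ) : C.γ k < n := C.pos_lt _

lemma γ_invol (k : ℤ) (h0 : 0 ≤ k) (h1 : k < n) : C.γ (C.γ k) = k := by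
  have h2 : C.f (C.γ (C.γ k)) = C.f k := by
    rw [← C.γ_spec, ← C.γ_spec, Γ.invol]
  exact C.inj _ _ (C.γ_nonneg _) (C.γ_lt _) h0 h1 h2

lemma γ_ne (k : ℤ) (h0 : 0 ≤ k) (h1 : k < n) : C.γ k ≠ k := by
  intro h
  have := Γ.nofix c₀ (C.f k)
  rw [C.γ_spec, h] at this; exact this rfl

/-- The color of the cycle edge from position `k` to `k+1`. -/
def col (k : ℤ) : Fin 3 := if k % 2 = 0 then C.a else C.b

lemma col_ne (k : ℤ) : C.col k ≠ c₀ := by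
  unfold col; split
  · exact C.ha
  · exact C.hb

lemma col_congr (j k : ℤ) (h : j % 2 = k % 2) : C.col j = C.col k := by
  unfold col; rw [h]

lemma step (k : ℤ) : Γ.mat (C.col k) (C.f k) = C.f (k + 1) := by
  unfold col; split
  · exact C.stepA k ‹_›
  · exact C.stepB k (by omega)

lemma back (k : ℤ) : Γ.mat (C.col k) (C.f (k + 1)) = C.f k := by
  rw [← C.step k, Γ.invol]

/-- The alternating labeling associated with the coordinates. -/
noncomputable def sC (v : V) : Bool := decide ((C.pos v) % 2 = 0)

lemma sC_f (k : ℤ) (h0 : 0 ≤ k) (h1 : k < n) : C.sC (C.f k) = decide (k % 2 = 0) := by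
  unfold sC; rw [C.posf k h0 h1]

lemma sC_alt : ∀ c' v', c' ≠ c₀ → C.sC (Γ.mat c' v') = ! C.sC v' := by
  intro c' v' hc'
  set p := C.pos v' with hp
  have hp0 : 0 ≤ p := C.pos_nonneg v'
  have hp1 : p < n := C.pos_lt v'
  have hv' : v' = C.f p := (C.f_pos v').symm
  have hev := C.heven
  have hn2 := C.hn
  have hsv : C.sC v' = decide (p % 2 = 0) := by rw [hv', C.sC_f p hp0 hp1, hp]
  have key : ∀ q : ℤ, 0 ≤ q → q < n → (p + q) % 2 = 1 → Γ.mat c' v' = C.f q →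
      C.sC (Γ.mat c' v') = ! C.sC v' := by
    intro q hq0 hq1 hpar heq
    rw [heq, C.sC_f q hq0 hq1, hsv]
    exact decide_parity_flip hpar
  rcases fin3_cases C.a C.b c₀ c' C.ha C.hb C.hab hc' with rfl | rfl
  · -- color a : edge between 2i and 2i+1
    by_cases hpar : p % 2 = 0
    · have hstep : Γ.mat C.a v' = C.f (p + 1) := by rw [hv']; exact C.stepA p hpar
      exact key (p+1) (by omega) (by omega) (by omega) hstep
    · have hstep : Γ.mat C.a v' = C.f (p - 1) := by
        have := C.stepA (p-1) (by omega)
        rw [show p - 1 + 1 = p by ring] at this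
        rw [hv', ← this, Γ.invol]
      exact key (p-1) (by omega) (by omega) (by omega) hstep
  · -- color b : edge between 2i+1 and 2i+2
    by_cases hpar : p % 2 = 0
    · -- backward step, possibly wrapping at p = 0
      have hstep : Γ.mat C.b v' = C.f (p - 1) := by
        have := C.stepB (p-1) (by omega)
        rw [show p - 1 + 1 = p by ring] at this
        rw [hv', ← this, Γ.invol]
      by_cases h0 : p = 0
      · have : C.f (p - 1) = C.f (n - 1) := by
          rw [h0]; have := C.periodic (-1); rw [show (-1 : ℤ) + n = n - 1 by ring] at this
          rw [show (0:ℤ) - 1 = -1 by ring, ← this]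
        rw [this] at hstep
        exact key (n-1) (by omega) (by omega) (by omega) hstep
      · exact key (p-1) (by omega) (by omega) (by omega) hstep
    · -- forward step, possibly wrapping at p = n - 1
      have hstep : Γ.mat C.b v' = C.f (p + 1) := by rw [hv']; exact C.stepB p (by omega)
      by_cases h0 : p = n - 1
      · have : C.f (p + 1) = C.f 0 := by rw [h0, show n - 1 + 1 = 0 + n by ring, C.periodic]
        rw [this] at hstep
        exact key 0 (by omega) (by omega) (by omega) hstep
      · exact key (p+1) (by omega) (by omega) (by omega) hstep

end Coord
end CoordSec
section S3
open TaitGraph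

variable {V : Type} {Γ : TaitGraph V} {c₀ : Fin 3} {n : ℤ}

namespace Coord

lemma decide_parity_back {p q : ℤ} (h : (decide (q % 2 = 0)) = (decide (p % 2 = 0))) :
    (p + q) % 2 = 0 := by
  by_cases h0 : p % 2 = 0 <;> by_cases h1 : q % 2 = 0 <;> simp [h0, h1] at h ⊢ <;> omega

variable (C : Coord Γ c₀ n)

lemma agree_conn (s : V → Bool) (hs : ∀ c' v', c' ≠ c₀ → s (Γ.mat c' v') = ! s v')
    {v w : V} (h : Γ.Conn c₀ v w) : ((s v = C.sC v) ↔ (s w = C.sC w)) := by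
  induction h with
  | refl => exact Iff.rfl
  | @tail b c h1 step ih =>
    obtain ⟨c', hc', heq⟩ := step
    rw [← heq, hs c' b hc', C.sC_alt c' b hc']
    exact ih.trans ⟨fun h => by rw [h], fun h => by cases hb : s b <;> cases hb2 : C.sC b <;> simp_all⟩

lemma orRev_iff (hconn : ∀ x y, Γ.Conn c₀ x y) (p : ℤ) (h0 : 0 ≤ p) (h1 : p < n) :
    Γ.OrientationReversing c₀ (C.f p) ↔ (p + C.γ p) % 2 = 0 := by
  constructor
  · intro h
    have := h.2 C.sC C.sC_alt
    rw [C.γ_spec, C.sC_f p h0 h1, C.sC_f _ (C.γ_nonneg _) (C.γ_lt _)] at this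
    exact decide_parity_back this
  · intro hpar
    refine ⟨hconn _ _, ?_⟩
    intro s hs
    have hag := C.agree_conn s hs (hconn (C.f p) (Γ.mat c₀ (C.f p)))
    have hsc : C.sC (Γ.mat c₀ (C.f p)) = C.sC (C.f p) := by
      rw [C.γ_spec, C.sC_f p h0 h1, C.sC_f _ (C.γ_nonneg _) (C.γ_lt _)]
      exact decide_parity_eq (by omega)
    revert hag hsc
    cases hsp : s (C.f p) <;> cases hscp : C.sC (C.f p) <;>
      cases hsq : s (Γ.mat c₀ (C.f p)) <;> cases hscq : C.sC (Γ.mat c₀ (C.f p)) <;>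
      simp_all

include C in
/-- An orientation-reversing edge is not parallel to any other edge. -/
lemma orRev_nonparallel {v : V} (h : Γ.OrientationReversing c₀ v) :
    ∀ c', c' ≠ c₀ → Γ.mat c' v ≠ Γ.mat c₀ v := by
  intro c' hc' heq
  have h1 := h.2 C.sC C.sC_alt
  have h2 := C.sC_alt c' v hc'
  rw [heq, h1] at h2
  simp at h2

/-- Rotating a coordinatization by `t`. -/
def rot (t : ℤ) (ht0 : 0 ≤ t) (ht1 : t ≤ n) : Coord Γ c₀ n where
  a := if t % 2 = 0 then C.a else C.b
  b := if t % 2 = 0 then C.b else C.a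
  ha := by split; exacts [C.ha, C.hb]
  hb := by split; exacts [C.hb, C.ha]
  hab := by split; exacts [C.hab, C.hab.symm]
  hn := C.hn
  heven := C.heven
  f := fun k => C.f (k + t)
  periodic := fun k => by
    show C.f (k + n + t) = C.f (k + t)
    rw [show k + n + t = (k + t) + n by ring, C.periodic]
  inj := by
    intro j k hj0 hj1 hk0 hk1 heq
    -- bring j + t and k + t into the window
    have hn0 : 0 < n := by have := C.hn; omega
    rcases le_or_gt n (j + t) with hj2 | hj2 <;> rcases le_or_gt n (k + t) with hk2 | hk2
    · have e1 : C.f (j + t - n) = C.f (j + t) := C.periodic' _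
      have e2 : C.f (k + t - n) = C.f (k + t) := C.periodic' _
      have := C.inj (j + t - n) (k + t - n) (by omega) (by omega) (by omega) (by omega)
        (by rw [e1, e2, heq])
      omega
    · have e1 : C.f (j + t - n) = C.f (j + t) := C.periodic' _
      have := C.inj (j + t - n) (k + t) (by omega) (by omega) (by omega) (by omega)
        (by rw [e1, heq])
      omega
    · have e2 : C.f (k + t - n) = C.f (k + t) := C.periodic' _
      have := C.inj (j + t) (k + t - n) (by omega) (by omega) (by omega) (by omega)
        (by rw [e2, heq])
      omega
    · have := C.inj (j + t) (k + t) (by omega) (by omega) (by omega) (by omega) heq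
      omega
  surj := by
    intro v
    obtain ⟨k, hk0, hk1, hk⟩ := C.surj v
    rcases le_or_gt t k with h | h
    · exact ⟨k - t, by omega, by omega, by simpa using hk⟩
    · refine ⟨k - t + n, by omega, by omega, ?_⟩
      rw [show k - t + n + t = k + n by ring, C.periodic]
      exact hk
  stepA := by
    intro k hk
    by_cases ht : t % 2 = 0
    · rw [if_pos ht, show k + 1 + t = (k + t) + 1 by ring]
      exact C.stepA (k + t) (by omega)
    · rw [if_neg ht, show k + 1 + t = (k + t) + 1 by ring]
      exact C.stepB (k + t) (by omega)
  stepB := by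
    intro k hk
    by_cases ht : t % 2 = 0
    · rw [if_pos ht, show k + 1 + t = (k + t) + 1 by ring]
      exact C.stepB (k + t) (by omega)
    · rw [if_neg ht, show k + 1 + t = (k + t) + 1 by ring]
      exact C.stepA (k + t) (by omega)

lemma rot_f (t : ℤ) (ht0 : 0 ≤ t) (ht1 : t ≤ n) (k : ℤ) :
    (C.rot t ht0 ht1).f k = C.f (k + t) := rfl

end Coord
end S3
section S4
open TaitGraph
open scoped Classical

variable {V : Type} (Γ : TaitGraph V) (c₀ : Fin 3) (v : V)

/-- The matching functions of the compressed graph. -/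
noncomputable def cmpMat (hpar : ∀ c', c' ≠ c₀ → Γ.mat c' v ≠ Γ.mat c₀ v) (c : Fin 3)
    (w : {w : V // w ≠ v ∧ w ≠ Γ.mat c₀ v}) : {w : V // w ≠ v ∧ w ≠ Γ.mat c₀ v} :=
  if hc : c = c₀ then
    ⟨Γ.mat c₀ w.1, fun h => w.2.2 (Γ.matInj c₀ (by rw [Γ.invol]; exact h)),
      fun h => w.2.1 (Γ.matInj c₀ h)⟩
  else if h1 : Γ.mat c w.1 = v then
    ⟨Γ.mat c (Γ.mat c₀ v),
      fun h => hpar c hc (by have := congrArg (Γ.mat c) h; rw [Γ.invol] at this; exact this.symm),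
      fun h => Γ.nofix c _ h⟩
  else if h2 : Γ.mat c w.1 = Γ.mat c₀ v then
    ⟨Γ.mat c v, fun h => Γ.nofix c v h, hpar c hc⟩
  else ⟨Γ.mat c w.1, h1, h2⟩

variable (hpar : ∀ c', c' ≠ c₀ → Γ.mat c' v ≠ Γ.mat c₀ v)

lemma cmpMat_c0 (w) : (cmpMat Γ c₀ v hpar c₀ w).1 = Γ.mat c₀ w.1 := by
  unfold cmpMat; rw [dif_pos rfl]

lemma cmpMat_eqv {c} (hc : c ≠ c₀) (w) (h1 : Γ.mat c w.1 = v) :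
    (cmpMat Γ c₀ v hpar c w).1 = Γ.mat c (Γ.mat c₀ v) := by
  unfold cmpMat; rw [dif_neg hc, dif_pos h1]

lemma cmpMat_equ {c} (hc : c ≠ c₀) (w) (h2 : Γ.mat c w.1 = Γ.mat c₀ v) :
    (cmpMat Γ c₀ v hpar c w).1 = Γ.mat c v := by
  have h1 : ¬ Γ.mat c w.1 = v := by rw [h2]; exact fun h => Γ.nofix c₀ v h
  unfold cmpMat; rw [dif_neg hc, dif_neg h1, dif_pos h2]

lemma cmpMat_other {c} (hc : c ≠ c₀) (w) (h1 : ¬ Γ.mat c w.1 = v)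
    (h2 : ¬ Γ.mat c w.1 = Γ.mat c₀ v) :
    (cmpMat Γ c₀ v hpar c w).1 = Γ.mat c w.1 := by
  unfold cmpMat; rw [dif_neg hc, dif_neg h1, dif_neg h2]

/-- The compression of `Γ` along the edge of color `c₀` at `v`. -/
noncomputable def cmpGraph : TaitGraph {w : V // w ≠ v ∧ w ≠ Γ.mat c₀ v} where
  mat := cmpMat Γ c₀ v hpar
  invol := by
    intro c w
    apply Subtype.ext
    by_cases hc : c = c₀
    · subst hc
      rw [cmpMat_c0, cmpMat_c0, Γ.invol]
    · by_cases h1 : Γ.mat c w.1 = v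
      · have e1 := cmpMat_eqv Γ c₀ v hpar hc w h1
        have e2 : Γ.mat c (cmpMat Γ c₀ v hpar c w).1 = Γ.mat c₀ v := by rw [e1, Γ.invol]
        rw [cmpMat_equ Γ c₀ v hpar hc _ e2]
        exact (Γ.matInj c (by rw [Γ.invol, h1])).symm
      · by_cases h2 : Γ.mat c w.1 = Γ.mat c₀ v
        · have e1 := cmpMat_equ Γ c₀ v hpar hc w h2
          have e2 : Γ.mat c (cmpMat Γ c₀ v hpar c w).1 = v := by rw [e1, Γ.invol]
          rw [cmpMat_eqv Γ c₀ v hpar hc _ e2]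
          exact (Γ.matInj c (by rw [Γ.invol, h2])).symm
        · have e1 := cmpMat_other Γ c₀ v hpar hc w h1 h2
          have e2 : Γ.mat c (cmpMat Γ c₀ v hpar c w).1 = w.1 := by rw [e1, Γ.invol]
          rw [cmpMat_other Γ c₀ v hpar hc _ (by rw [e2]; exact w.2.1) (by rw [e2]; exact w.2.2), e2]
  nofix := by
    intro c w h
    have hval := congrArg Subtype.val h
    by_cases hc : c = c₀
    · subst hc
      rw [cmpMat_c0] at hval
      exact Γ.nofix _ w.1 hval
    · by_cases h1 : Γ.mat c w.1 = v
      · rw [cmpMat_eqv Γ c₀ v hpar hc w h1] at hval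
        -- mat c (mat c₀ v) = w, so mat c₀ v = mat c w = v, contradiction
        have : Γ.mat c₀ v = Γ.mat c w.1 := by rw [← hval, Γ.invol]
        rw [h1] at this
        exact Γ.nofix c₀ v this
      · by_cases h2 : Γ.mat c w.1 = Γ.mat c₀ v
        · rw [cmpMat_equ Γ c₀ v hpar hc w h2] at hval
          have : v = Γ.mat c w.1 := by rw [← hval, Γ.invol]
          rw [h2] at this
          exact Γ.nofix c₀ v this.symm
        · rw [cmpMat_other Γ c₀ v hpar hc w h1 h2] at hval
          exact Γ.nofix c w.1 hval

lemma cmpGraph_mat (c w) : (cmpGraph Γ c₀ v hpar).mat c w = cmpMat Γ c₀ v hpar c w := rfl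

lemma cmp_isCompression : Γ.IsCompression c₀ v (cmpGraph Γ c₀ v hpar) := by
  refine ⟨Equiv.refl _, ?_, ?_⟩
  · intro w
    exact cmpMat_c0 Γ c₀ v hpar w
  · intro c' hc' w
    by_cases h1 : Γ.mat c' w.1 = v
    · exact Or.inl ⟨h1, cmpMat_eqv Γ c₀ v hpar hc' w h1⟩
    · by_cases h2 : Γ.mat c' w.1 = Γ.mat c₀ v
      · exact Or.inr (Or.inl ⟨h2, cmpMat_equ Γ c₀ v hpar hc' w h2⟩)
      · exact Or.inr (Or.inr ⟨h1, h2, cmpMat_other Γ c₀ v hpar hc' w h1 h2⟩)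

lemma card_sub [Fintype V] (x y : V) (hxy : x ≠ y) :
    Nat.card {w : V // w ≠ x ∧ w ≠ y} = Nat.card V - 2 := by
  classical
  rw [Nat.card_eq_fintype_card, Nat.card_eq_fintype_card, Fintype.card_subtype]
  have h1 : (Finset.univ.filter (fun w : V => w ≠ x ∧ w ≠ y)) = Finset.univ \ {x, y} := by
    ext w; simp [Finset.mem_sdiff]
  rw [h1, Finset.card_sdiff_of_subset (by intro w _; exact Finset.mem_univ w)]
  rw [Finset.card_pair hxy, Finset.card_univ]

end S4
section S5
open TaitGraph

variable {V : Type} [Fintype V]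

lemma exists_coord (Γ : TaitGraph V) (hne : Nonempty V) (hconn : ∀ x y : V, Γ.Conn 2 x y)
    (hcard2 : Nat.card V ≠ 2) :
    ∃ n : ℤ, n = (Nat.card V : ℤ) ∧ Nonempty (Coord Γ 2 n) := by
  classical
  obtain ⟨v₀⟩ := hne
  set r : V → V := Γ.mat 0 with hr
  set bb : V → V := Γ.mat 1 with hbb
  have hrinv : ∀ w, r (r w) = w := Γ.invol 0
  have hbinv : ∀ w, bb (bb w) = w := Γ.invol 1
  have hrnofix : ∀ w, r w ≠ w := Γ.nofix 0
  have hbnofix : ∀ w, bb w ≠ w := Γ.nofix 1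
  have hrinj : Function.Injective r := fun x y h => by rw [← hrinv x, h, hrinv]
  have hbinj : Function.Injective bb := fun x y h => by rw [← hbinv x, h, hbinv]
  have hrb : ∀ w, r w ≠ bb w := by
    intro w heq
    have hclosed : ∀ z, Γ.Conn 2 w z → z = w ∨ z = r w := by
      intro z hz
      induction hz with
      | refl => exact Or.inl rfl
      | @tail p q hp step ih =>
        obtain ⟨c', hc', hstep⟩ := step
        have hc01 : c' = 0 ∨ c' = 1 :=
          fin3_cases 0 1 2 c' (by decide) (by decide) (by decide) hc'
        rcases ih with rfl | rfl <;> rcases hc01 with rfl | rfl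
        · exact Or.inr hstep.symm
        · right; rw [← hstep]; exact heq.symm
        · left; rw [← hstep]; exact hrinv w
        · left; rw [← hstep, ← hbb, heq, hbinv]
    have hall : ∀ z : V, z = w ∨ z = r w := fun z => hclosed z (hconn w z)
    apply hcard2
    rw [Nat.card_eq_fintype_card, ← Finset.card_univ]
    have huniv : (Finset.univ : Finset V) = {w, r w} := by
      ext z
      simp only [Finset.mem_univ, Finset.mem_insert, Finset.mem_singleton, true_iff]
      exact hall z
    rw [huniv, Finset.card_pair (Ne.symm (hrnofix w))]
  set T : V → V := fun w => bb (r w) with hT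
  set U : V → V := fun w => r (bb w) with hU
  have hTinj : Function.Injective T := fun x y h => hrinj (hbinj h)
  -- conjugation lemmas
  have hLC : ∀ (s : ℕ) (w : V), r (T^[s] w) = U^[s] (r w) := by
    intro s
    induction s with
    | zero => intro w; rfl
    | succ s ih =>
      intro w
      rw [Function.iterate_succ_apply', Function.iterate_succ_apply', ← ih w]
  have hLC2 : ∀ (s : ℕ) (w : V), bb (U^[s] w) = T^[s] (bb w) := by
    intro s
    induction s with
    | zero => intro w; rfl
    | succ s ih =>
      intro w
      rw [Function.iterate_succ_apply', Function.iterate_succ_apply', ← ih w]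
  have hINV : ∀ (s : ℕ) (w : V), T^[s] (U^[s] w) = w := by
    intro s
    induction s with
    | zero => intro w; rfl
    | succ s ih =>
      intro w
      rw [Function.iterate_succ_apply T, Function.iterate_succ_apply' U]
      show T^[s] (bb (r (r (bb (U^[s] w))))) = w
      rw [hrinv, hbinv]
      exact ih w
  -- the palindrome argument: `r` never maps the T-orbit of a point into itself
  have hPQ : ∀ s : ℕ, (∀ w : V, r w ≠ T^[s] w) ∧ (∀ w : V, bb w ≠ U^[s] w) := by
    intro s
    induction s with
    | zero => exact ⟨fun w => hrnofix w, fun w => hbnofix w⟩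
    | succ s ih =>
      constructor
      · intro w h
        rw [Function.iterate_succ_apply'] at h
        -- h : r w = bb (r (T^[s] w))
        have h2 : bb (r w) = r (T^[s] w) := by rw [h, hbinv]
        rw [hLC s w] at h2
        exact ih.2 (r w) h2
      · intro w h
        rw [Function.iterate_succ_apply'] at h
        have h2 : r (bb w) = bb (U^[s] w) := by rw [h, hrinv]
        rw [hLC2 s w] at h2
        exact ih.1 (bb w) h2
  have key : ∀ (i j : ℕ), r (T^[i] v₀) ≠ T^[j] v₀ := by
    intro i j h
    rw [hLC i v₀] at h
    have h2 : T^[i] (U^[i] (r v₀)) = T^[i] (T^[j] v₀) := by rw [h]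
    rw [hINV i (r v₀), ← Function.iterate_add_apply] at h2
    exact (hPQ (i + j)).1 v₀ h2
  -- periodic point machinery
  have hper : v₀ ∈ Function.periodicPts T := by
    obtain ⟨i, j, hij, h⟩ := Finite.exists_ne_map_eq_of_infinite (fun i : ℕ => T^[i] v₀)
    rcases Nat.lt_or_ge i j with hlt | hge
    · refine Function.mk_mem_periodicPts (n := j - i) (by omega) ?_
      have h2 : T^[i] (T^[j-i] v₀) = T^[i] v₀ := by
        rw [← Function.iterate_add_apply, show i + (j - i) = j by omega]
        exact h.symm
      exact hTinj.iterate i h2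
    · have hlt : j < i := by omega
      refine Function.mk_mem_periodicPts (n := i - j) (by omega) ?_
      have h2 : T^[j] (T^[i-j] v₀) = T^[j] v₀ := by
        rw [← Function.iterate_add_apply, show j + (i - j) = i by omega]
        exact h
      exact hTinj.iterate j h2
  set m : ℕ := Function.minimalPeriod T v₀ with hm
  have hm0 : 0 < m := Function.minimalPeriod_pos_of_mem_periodicPts hper
  have hmT : T^[m] v₀ = v₀ := Function.iterate_minimalPeriod
  have hinjOn : ∀ i j : ℕ, i < m → j < m → T^[i] v₀ = T^[j] v₀ → i = j := by
    intro i j hi hj h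
    exact Function.iterate_injOn_Iio_minimalPeriod (by exact hi) (by exact hj) h
  set M : ℤ := (m : ℤ) with hM
  have hM0 : 0 < M := by omega
  -- the ℤ-indexed orbit
  set A : ℤ → V := fun i => T^[((i % M).toNat)] v₀ with hA
  have hAdef : ∀ i : ℤ, A i = T^[((i % M).toNat)] v₀ := fun i => rfl
  have hmodlt : ∀ i : ℤ, 0 ≤ i % M ∧ i % M < M :=
    fun i => ⟨Int.emod_nonneg i (by omega), Int.emod_lt_of_pos i hM0⟩
  have hAsmall : ∀ i : ℤ, 0 ≤ i → i < M → A i = T^[i.toNat] v₀ := by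
    intro i h0 h1
    rw [hAdef, Int.emod_eq_of_lt h0 h1]
  have hAper : ∀ i : ℤ, A (i + M) = A i := by
    intro i
    have hmod : (i + M) % M = i % M := by
      conv_lhs => rw [show i + M = i + M * 1 by ring, Int.add_mul_emod_self_left]
    rw [hAdef, hAdef, hmod]
  have hAstep : ∀ i : ℤ, A (i + 1) = T (A i) := by
    intro i
    have h1 := hmodlt i
    have hadd : (i + 1) % M = (i % M + 1 % M) % M := Int.add_emod i 1 M
    by_cases hc : i % M = M - 1
    · have h2 : (i + 1) % M = 0 := by
        rcases eq_or_lt_of_le (by omega : (1:ℤ) ≤ M) with hM1 | hM1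
        · rw [hadd, ← hM1]; simp [Int.emod_one]
        · have h1M : (1:ℤ) % M = 1 := Int.emod_eq_of_lt (by omega) hM1
          rw [hadd, h1M, hc, show M - 1 + 1 = M by ring, Int.emod_self]
      rw [hAdef (i+1), h2]
      show v₀ = T (A i)
      rw [hAdef i, hc, ← Function.iterate_succ_apply' T]
      rw [show (M - 1).toNat.succ = m by omega]
      exact hmT.symm
    · have hM2 : (2:ℤ) ≤ M := by
        rcases eq_or_lt_of_le (by omega : (1:ℤ) ≤ M) with hM1 | hM1
        · exfalso; apply hc; omega
        · omega
      have h2 : (i + 1) % M = i % M + 1 := by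
        have h1M : (1:ℤ) % M = 1 := Int.emod_eq_of_lt (by omega) (by omega)
        rw [hadd, h1M, Int.emod_eq_of_lt (by omega) (by omega)]
      rw [hAdef (i+1), h2, hAdef i, show (i % M + 1).toNat = (i % M).toNat + 1 by omega,
        Function.iterate_succ_apply' T]
  have hAinj : ∀ i j : ℤ, 0 ≤ i → i < M → 0 ≤ j → j < M → A i = A j → i = j := by
    intro i j hi0 hi1 hj0 hj1 h
    rw [hAsmall i hi0 hi1, hAsmall j hj0 hj1] at h
    have := hinjOn i.toNat j.toNat (by omega) (by omega) h
    omega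
  have keyZ : ∀ i j : ℤ, r (A i) ≠ A j := by
    intro i j h
    rw [hAdef, hAdef] at h
    exact key _ _ h
  have hA0 : A 0 = v₀ := by rw [hAdef]; norm_num
  -- the cycle enumeration
  set f : ℤ → V := fun k => if k % 2 = 0 then A (k / 2) else r (A (k / 2)) with hf
  have hfe : ∀ k, k % 2 = 0 → f k = A (k/2) := by
    intro k hk; simp only [hf]; rw [if_pos hk]
  have hfo : ∀ k, k % 2 = 1 → f k = r (A (k/2)) := by
    intro k hk; simp only [hf]; rw [if_neg (by omega)]
  have hfper : ∀ k, f (k + 2*M) = f k := by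
    intro k
    have hdiv : (k + 2*M)/2 = k/2 + M := by omega
    by_cases hk : k % 2 = 0
    · rw [hfe _ hk, hfe _ (by omega), hdiv, hAper]
    · rw [hfo _ (by omega), hfo _ (by omega), hdiv, hAper]
  have hfinj : ∀ j k, 0 ≤ j → j < 2*M → 0 ≤ k → k < 2*M → f j = f k → j = k := by
    intro j k hj0 hj1 hk0 hk1 h
    by_cases hj : j % 2 = 0 <;> by_cases hk : k % 2 = 0
    · rw [hfe _ hj, hfe _ hk] at h
      have := hAinj (j/2) (k/2) (by omega) (by omega) (by omega) (by omega) h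
      omega
    · rw [hfe _ hj, hfo _ (by omega)] at h
      exact absurd h.symm (keyZ _ _)
    · rw [hfo _ (by omega), hfe _ hk] at h
      exact absurd h (keyZ _ _)
    · rw [hfo _ (by omega), hfo _ (by omega)] at h
      have := hAinj (j/2) (k/2) (by omega) (by omega) (by omega) (by omega) (hrinj h)
      omega
  have hstepA : ∀ k, k % 2 = 0 → Γ.mat 0 (f k) = f (k+1) := by
    intro k hk
    rw [hfe _ hk, hfo (k+1) (by omega), show (k+1)/2 = k/2 by omega, ← hr]
  have hstepB : ∀ k, k % 2 = 1 → Γ.mat 1 (f k) = f (k+1) := by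
    intro k hk
    rw [hfo _ hk, hfe (k+1) (by omega), show (k+1)/2 = k/2 + 1 by omega, hAstep, ← hbb]
  have hback0 : ∀ k, k % 2 = 1 → Γ.mat 0 (f k) = f (k-1) := by
    intro k hk
    have := hstepA (k-1) (by omega)
    rw [show k-1+1 = k by ring] at this
    rw [← this, Γ.invol]
  have hback1 : ∀ k, k % 2 = 0 → Γ.mat 1 (f k) = f (k-1) := by
    intro k hk
    have := hstepB (k-1) (by omega)
    rw [show k-1+1 = k by ring] at this
    rw [← this, Γ.invol]
  have hsurj : ∀ v, ∃ k, 0 ≤ k ∧ k < 2*M ∧ f k = v := by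
    intro v
    have hcl : ∀ z, Γ.Conn 2 v₀ z → ∃ k, 0 ≤ k ∧ k < 2*M ∧ f k = z := by
      intro z hz
      induction hz with
      | refl =>
        refine ⟨0, le_refl 0, by omega, ?_⟩
        rw [hfe 0 (by omega)]
        show A 0 = v₀
        exact hA0
      | @tail p q hp step ih =>
        obtain ⟨k, hk0, hk1, hfk⟩ := ih
        obtain ⟨c', hc', hstep⟩ := step
        have hc01 : c' = 0 ∨ c' = 1 :=
          fin3_cases 0 1 2 c' (by decide) (by decide) (by decide) hc'
        rcases hc01 with rfl | rfl
        · by_cases hk : k % 2 = 0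
          · refine ⟨k+1, by omega, by omega, ?_⟩
            rw [← hstep, ← hfk, hstepA k hk]
          · refine ⟨k-1, by omega, by omega, ?_⟩
            rw [← hstep, ← hfk, hback0 k (by omega)]
        · by_cases hk : k % 2 = 0
          · -- backward step, possibly wrapping at k = 0
            by_cases h0 : k = 0
            · refine ⟨2*M - 1, by omega, by omega, ?_⟩
              rw [← hstep, ← hfk, hback1 k hk, h0]
              have := hfper (-1)
              rw [show (-1 : ℤ) + 2*M = 2*M - 1 by ring] at this
              rw [show (0:ℤ) - 1 = -1 by ring, ← this]
            · refine ⟨k-1, by omega, by omega, ?_⟩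
              rw [← hstep, ← hfk, hback1 k hk]
          · -- forward step, possibly wrapping at k = 2M - 1
            by_cases h0 : k = 2*M - 1
            · refine ⟨0, le_refl 0, by omega, ?_⟩
              rw [← hstep, ← hfk, hstepB k (by omega), h0]
              rw [show 2*M - 1 + 1 = 0 + 2*M by ring, hfper]
            · refine ⟨k+1, by omega, by omega, ?_⟩
              rw [← hstep, ← hfk, hstepB k (by omega)]
    exact hcl v (hconn v₀ v)
  have hbij : Function.Bijective (fun i : Fin (2*m) => f ((i : ℕ) : ℤ)) := by
    constructor
    · intro i j h
      simp only at h
      have hi := i.2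
      have hj := j.2
      have := hfinj ((i:ℕ):ℤ) ((j:ℕ):ℤ) (by omega) (by push_cast; omega)
        (by omega) (by push_cast; omega) h
      exact Fin.ext (by omega)
    · intro v
      obtain ⟨k, h0, h1, hk⟩ := hsurj v
      refine ⟨⟨k.toNat, by omega⟩, ?_⟩
      simp only
      rw [show ((k.toNat : ℕ) : ℤ) = k by omega]
      exact hk
  have hcardV : 2*m = Fintype.card V := by
    have := Fintype.card_of_bijective hbij
    simpa using this
  refine ⟨2*M, ?_, ⟨⟨0, 1, by decide, by decide, by decide, by omega, by omega,
    f, hfper, hfinj, hsurj, hstepA, hstepB⟩⟩⟩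
  rw [Nat.card_eq_fintype_card, ← hcardV]
  push_cast
  omega

end S5
section S6
open TaitGraph

lemma emod_step (M i : ℤ) (hM : 0 < M) :
    (i + 1) % M = if i % M = M - 1 then 0 else i % M + 1 := by
  have h1 : 0 ≤ i % M := Int.emod_nonneg i (by omega)
  have h2 : i % M < M := Int.emod_lt_of_pos i hM
  have hadd : (i + 1) % M = (i % M + 1 % M) % M := Int.add_emod i 1 M
  by_cases hc : i % M = M - 1
  · rw [if_pos hc]
    rcases eq_or_lt_of_le (by omega : (1:ℤ) ≤ M) with hM1 | hM1
    · rw [hadd, ← hM1]; simp [Int.emod_one]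
    · have h1M : (1:ℤ) % M = 1 := Int.emod_eq_of_lt (by omega) hM1
      rw [hadd, h1M, hc, show M - 1 + 1 = M by ring, Int.emod_self]
  · rw [if_neg hc]
    have hM1 : (1:ℤ) < M := by omega
    have h1M : (1:ℤ) % M = 1 := Int.emod_eq_of_lt (by omega) hM1
    rw [hadd, h1M, Int.emod_eq_of_lt (by omega) (by omega)]

/-- Two chords of the cycle cross. -/
def Cross (x y p q : ℤ) : Prop := (x < p ∧ p < y ∧ y < q) ∨ (p < x ∧ x < q ∧ q < y)

variable {V : Type} {Γ : TaitGraph V} {c₀ : Fin 3} {n : ℤ}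

/-- Key lemma: if the compression along the orientation-reversing chord `(x,y)` is
bipartite, then any other chord `(p,q)` has endpoints of equal parity iff it crosses
`(x,y)`. -/
lemma keyD (C : Coord Γ c₀ n) (hn6 : 6 ≤ n)
    (x y : ℤ) (hx0 : 0 ≤ x) (hxy : x < y) (hyn : y < n)
    (hbadxy : (x + y) % 2 = 0)
    (hchord : Γ.mat c₀ (C.f x) = C.f y)
    (hpar : ∀ c', c' ≠ c₀ → Γ.mat c' (C.f x) ≠ Γ.mat c₀ (C.f x))
    (σ : {w : V // w ≠ C.f x ∧ w ≠ Γ.mat c₀ (C.f x)} → Bool)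
    (hσ : ∀ c w, σ ((cmpGraph Γ c₀ (C.f x) hpar).mat c w) = ! σ w)
    (p q : ℤ) (hp0 : 0 ≤ p) (hpq : p < q) (hqn : q < n)
    (hpx : p ≠ x) (hpy : p ≠ y) (hqx : q ≠ x) (hqy : q ≠ y)
    (hchpq : Γ.mat c₀ (C.f p) = C.f q) :
    ((p + q) % 2 = 0 ↔ Cross x y p q) := by
  have hev := C.heven
  have hyx2 : 2 ≤ y - x := by omega
  have hyxN : y - x ≤ n - 2 := by omega
  set N : ℤ := n - 2 with hNdef
  have hN0 : 0 < N := by omega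
  -- generic inequality tool for values of f
  have hfne : ∀ a b : ℤ, 0 ≤ b → b < n → -n < a → a < n → a ≠ b → a + n ≠ b →
      C.f a ≠ C.f b := by
    intro a b hb0 hb1 ha0 ha1 hab hab' hcon
    rcases le_or_gt 0 a with h | h
    · exact hab (C.inj a b h ha1 hb0 hb1 hcon)
    · have hper : C.f (a + n) = C.f a := C.periodic a
      exact hab' (C.inj (a+n) b (by omega) (by omega) hb0 hb1 (by rw [hper]; exact hcon))
  -- the enumeration of the compressed cycle
  set φ : ℤ → ℤ :=
    fun i => if i % N < y - x - 1 then x + 1 + i % N else x - 1 - (i % N - (y - x - 1)) with hφ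
  have hjmod : ∀ i : ℤ, 0 ≤ i % N ∧ i % N < N :=
    fun i => ⟨Int.emod_nonneg i (by omega), Int.emod_lt_of_pos i hN0⟩
  have hφ1 : ∀ i, i % N < y - x - 1 → φ i = x + 1 + i % N := by
    intro i h; simp only [hφ]; rw [if_pos h]
  have hφ2 : ∀ i, y - x - 1 ≤ i % N → φ i = y - 2 - i % N := by
    intro i h; simp only [hφ]; rw [if_neg (by omega)]; ring
  -- membership of the enumerated vertices in the compressed graph
  have hval : ∀ i : ℤ, ∃ k, 0 ≤ k ∧ k < n ∧ k ≠ x ∧ k ≠ y ∧ C.f (φ i) = C.f k := by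
    intro i
    obtain ⟨hj0, hj1⟩ := hjmod i
    by_cases h : i % N < y - x - 1
    · exact ⟨x + 1 + i % N, by omega, by omega, by omega, by omega, by rw [hφ1 i h]⟩
    · have he := hφ2 i (by omega)
      rcases le_or_gt 0 (y - 2 - i % N) with h2 | h2
      · exact ⟨y - 2 - i % N, by omega, by omega, by omega, by omega, by rw [he]⟩
      · refine ⟨y - 2 - i % N + n, by omega, by omega, by omega, by omega, ?_⟩
        rw [he, ← C.periodic (y - 2 - i % N)]
  have hmem : ∀ i : ℤ, C.f (φ i) ≠ C.f x ∧ C.f (φ i) ≠ Γ.mat c₀ (C.f x) := by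
    intro i
    obtain ⟨k, h0, h1, hkx, hky, he⟩ := hval i
    rw [hchord, he]
    constructor
    · intro hcon; exact hkx (C.inj k x h0 h1 hx0 (by omega) hcon)
    · intro hcon; exact hky (C.inj k y h0 h1 (by omega) hyn hcon)
  set g : ℤ → {w : V // w ≠ C.f x ∧ w ≠ Γ.mat c₀ (C.f x)} :=
    fun i => ⟨C.f (φ i), hmem i⟩ with hg
  set σ' : ℤ → Bool := fun i => σ (g i) with hσ'
  -- the labeling alternates along the compressed cycle
  have halt : ∀ i : ℤ, σ' (i + 1) = ! σ' i := by
    intro i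
    obtain ⟨hj0, hj1⟩ := hjmod i
    set j : ℤ := i % N with hjdef
    have hstepmod := emod_step N i hN0
    show σ (g (i+1)) = ! σ (g i)
    rcases lt_trichotomy j (y - x - 2) with hA | hB | hCD
    · -- interior step inside the arc (x,y)
      have hfi : φ i = x + 1 + j := hφ1 i (by omega)
      have hj' : (i+1) % N = j + 1 := by rw [hstepmod, if_neg (by omega)]
      have hfi1 : φ (i+1) = x + 2 + j := by
        rw [hφ1 (i+1) (by omega), hj']; ring
      have he : Γ.mat (C.col (x+1+j)) (C.f (φ i)) = C.f (x+2+j) := by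
        rw [hfi]
        have := C.step (x+1+j)
        rw [show x+1+j+1 = x+2+j by ring] at this
        exact this
      have h1 : ¬ Γ.mat (C.col (x+1+j)) (g i).1 = C.f x := by
        show ¬ Γ.mat (C.col (x+1+j)) (C.f (φ i)) = C.f x
        rw [he]; exact hfne _ _ hx0 (by omega) (by omega) (by omega) (by omega) (by omega)
      have h2 : ¬ Γ.mat (C.col (x+1+j)) (g i).1 = Γ.mat c₀ (C.f x) := by
        show ¬ Γ.mat (C.col (x+1+j)) (C.f (φ i)) = Γ.mat c₀ (C.f x)
        rw [he, hchord]
        exact hfne _ _ (by omega) hyn (by omega) (by omega) (by omega) (by omega)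
      have hedge : (cmpGraph Γ c₀ (C.f x) hpar).mat (C.col (x+1+j)) (g i) = g (i+1) := by
        apply Subtype.ext
        rw [cmpGraph_mat, cmpMat_other Γ c₀ (C.f x) hpar (C.col_ne _) (g i) h1 h2]
        show Γ.mat (C.col (x+1+j)) (C.f (φ i)) = C.f (φ (i+1))
        rw [he, hfi1]
      rw [← hedge]
      exact hσ _ _
    · -- the merged edge near x-1/y-1
      have hfi : φ i = y - 1 := by rw [hφ1 i (by omega)]; omega
      have hBN : j ≠ N - 1 := by
        intro hcon; rw [hcon] at hB; omega
      have hj' : (i+1) % N = y - x - 1 := by rw [hstepmod, if_neg (by omega)]; omega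
      have hfi1 : φ (i+1) = x - 1 := by
        rw [hφ2 (i+1) (by omega), hj']; ring
      have he : Γ.mat (C.col (y-1)) (C.f (φ i)) = Γ.mat c₀ (C.f x) := by
        rw [hfi, hchord]
        have := C.step (y-1)
        rw [show y-1+1 = y by ring] at this
        exact this
      have hcolxy : C.col (y-1) = C.col (x-1) := C.col_congr _ _ (by omega)
      have he2 : Γ.mat (C.col (y-1)) (C.f x) = C.f (x-1) := by
        rw [hcolxy]
        have := C.back (x-1)
        rw [show x-1+1 = x by ring] at this
        exact this
      have hedge : (cmpGraph Γ c₀ (C.f x) hpar).mat (C.col (y-1)) (g i) = g (i+1) := by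
        apply Subtype.ext
        rw [cmpGraph_mat, cmpMat_equ Γ c₀ (C.f x) hpar (C.col_ne _) (g i) he]
        show Γ.mat (C.col (y-1)) (C.f x) = C.f (φ (i+1))
        rw [he2, hfi1]
      rw [← hedge]
      exact hσ _ _
    · rcases lt_trichotomy j (N - 1) with hC | hD | hD'
      · -- interior step outside the arc, traversed in reverse
        have hge : y - x - 1 ≤ j := by omega
        have hfi : φ i = y - 2 - j := hφ2 i hge
        have hj' : (i+1) % N = j + 1 := by rw [hstepmod, if_neg (by omega)]
        have hfi1 : φ (i+1) = y - 3 - j := by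
          rw [hφ2 (i+1) (by omega), hj']; ring
        have he : Γ.mat (C.col (y-3-j)) (C.f (φ i)) = C.f (y-3-j) := by
          rw [hfi]
          have := C.back (y-3-j)
          rw [show y-3-j+1 = y-2-j by ring] at this
          exact this
        have h1 : ¬ Γ.mat (C.col (y-3-j)) (g i).1 = C.f x := by
          show ¬ Γ.mat (C.col (y-3-j)) (C.f (φ i)) = C.f x
          rw [he]; exact hfne _ _ hx0 (by omega) (by omega) (by omega) (by omega) (by omega)
        have h2 : ¬ Γ.mat (C.col (y-3-j)) (g i).1 = Γ.mat c₀ (C.f x) := by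
          show ¬ Γ.mat (C.col (y-3-j)) (C.f (φ i)) = Γ.mat c₀ (C.f x)
          rw [he, hchord]
          exact hfne _ _ (by omega) hyn (by omega) (by omega) (by omega) (by omega)
        have hedge : (cmpGraph Γ c₀ (C.f x) hpar).mat (C.col (y-3-j)) (g i) = g (i+1) := by
          apply Subtype.ext
          rw [cmpGraph_mat, cmpMat_other Γ c₀ (C.f x) hpar (C.col_ne _) (g i) h1 h2]
          show Γ.mat (C.col (y-3-j)) (C.f (φ i)) = C.f (φ (i+1))
          rw [he, hfi1]
        rw [← hedge]
        exact hσ _ _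
      · -- the merged edge near x+1/y+1 (wrap-around)
        have hfi : φ i = y + 1 - n := by
          rw [hφ2 i (by omega)]; omega
        have hj' : (i+1) % N = 0 := by rw [hstepmod, if_pos (by omega)]
        have hfi1 : φ (i+1) = x + 1 := by
          rw [hφ1 (i+1) (by omega), hj']; ring
        have hfy1 : C.f (φ i) = C.f (y + 1) := by
          rw [hfi, ← C.periodic (y + 1 - n)]
          congr 1; ring
        have he : Γ.mat (C.col y) (C.f (φ i)) = Γ.mat c₀ (C.f x) := by
          rw [hfy1, hchord]
          exact C.back y
        have hcolxy : C.col y = C.col x := C.col_congr _ _ (by omega)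
        have he2 : Γ.mat (C.col y) (C.f x) = C.f (x+1) := by
          rw [hcolxy]; exact C.step x
        have hedge : (cmpGraph Γ c₀ (C.f x) hpar).mat (C.col y) (g i) = g (i+1) := by
          apply Subtype.ext
          rw [cmpGraph_mat, cmpMat_equ Γ c₀ (C.f x) hpar (C.col_ne _) (g i) he]
          show Γ.mat (C.col y) (C.f x) = C.f (φ (i+1))
          rw [he2, hfi1]
        rw [← hedge]
        exact hσ _ _
      · omega
  -- alternation propagates
  have hchain : ∀ (d : ℕ) (i : ℤ), σ' (i + d) = (if d % 2 = 0 then σ' i else ! σ' i) := by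
    intro d
    induction d with
    | zero => intro i; simp
    | succ d ih =>
      intro i
      have hcast : (i + ((d+1 : ℕ) : ℤ)) = (i + d) + 1 := by push_cast; ring
      rw [hcast, halt (i + d), ih i]
      by_cases hd : d % 2 = 0
      · rw [if_pos hd, if_neg (by omega)]
      · rw [if_neg hd, if_pos (by omega), Bool.not_not]
  have hpareq : ∀ i j : ℤ, (i - j) % 2 = 0 → σ' i = σ' j := by
    intro i j hij
    rcases le_or_gt j i with h | h
    · have hrw : i = j + (((i - j).toNat : ℕ) : ℤ) := by omega
      rw [hrw, hchain, if_pos (by omega)]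
    · have hrw : j = i + (((j - i).toNat : ℕ) : ℤ) := by omega
      rw [hrw, hchain, if_pos (by omega)]
  -- locate arbitrary vertices on the compressed cycle
  have hidx : ∀ s : ℤ, 0 ≤ s → s < n → s ≠ x → s ≠ y →
      ∃ i : ℤ, C.f (φ i) = C.f s ∧
        ((x < s ∧ s < y ∧ (i - (s - x - 1)) % 2 = 0) ∨
         (¬(x < s ∧ s < y) ∧ (i - (s + y)) % 2 = 0)) := by
    intro s h0 h1 hsx hsy
    rcases lt_trichotomy s x with hs | hs | hs
    · -- s < x : outside
      refine ⟨y - 2 - s, ?_, Or.inr ⟨by omega, by omega⟩⟩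
      have hmod : (y - 2 - s) % N = y - 2 - s := Int.emod_eq_of_lt (by omega) (by omega)
      rw [hφ2 _ (by rw [hmod]; omega), hmod]
      congr 1; omega
    · exact absurd hs hsx
    · rcases lt_trichotomy s y with hs2 | hs2 | hs2
      · -- inside
        refine ⟨s - x - 1, ?_, Or.inl ⟨by omega, by omega, by omega⟩⟩
        have hmod : (s - x - 1) % N = s - x - 1 := Int.emod_eq_of_lt (by omega) (by omega)
        rw [hφ1 _ (by rw [hmod]; omega), hmod]
        congr 1; omega
      · exact absurd hs2 hsy
      · -- s > y : outside
        refine ⟨y - 2 - s + n, ?_, Or.inr ⟨by omega, by omega⟩⟩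
        have hmod : (y - 2 - s + n) % N = y - 2 - s + n := Int.emod_eq_of_lt (by omega) (by omega)
        rw [hφ2 _ (by rw [hmod]; omega), hmod, show y - 2 - (y - 2 - s + n) = s - n by ring,
          ← C.periodic (s - n), show s - n + n = s by ring]
  -- the surviving chord (p,q) is an edge of the compressed graph
  obtain ⟨ip, hfp, hcp⟩ := hidx p hp0 (by omega) hpx hpy
  obtain ⟨iq, hfq, hcq⟩ := hidx q (by omega) hqn hqx hqy
  have hmemp : C.f p ≠ C.f x ∧ C.f p ≠ Γ.mat c₀ (C.f x) := by rw [← hfp]; exact hmem ip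
  have hmemq : C.f q ≠ C.f x ∧ C.f q ≠ Γ.mat c₀ (C.f x) := by rw [← hfq]; exact hmem iq
  have hedge : (cmpGraph Γ c₀ (C.f x) hpar).mat c₀ ⟨C.f p, hmemp⟩ = ⟨C.f q, hmemq⟩ := by
    apply Subtype.ext
    rw [cmpGraph_mat, cmpMat_c0]
    exact hchpq
  have hflip : σ ⟨C.f q, hmemq⟩ = ! σ ⟨C.f p, hmemp⟩ := by
    rw [← hedge]; exact hσ _ _
  have hgp : g ip = ⟨C.f p, hmemp⟩ := Subtype.ext hfp
  have hgq : g iq = ⟨C.f q, hmemq⟩ := Subtype.ext hfq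
  have hodd : (iq - ip) % 2 = 1 := by
    by_contra hcon
    have heq : σ' iq = σ' ip := hpareq iq ip (by omega)
    have heq2 : σ (g iq) = σ (g ip) := heq
    rw [hgp, hgq, hflip] at heq2
    simp at heq2
  unfold Cross
  rcases hcp with ⟨h1, h2, h3⟩ | ⟨h1, h3⟩ <;> rcases hcq with ⟨h4, h5, h6⟩ | ⟨h4, h6⟩ <;> omega

end S6
section S7
namespace Coord
open TaitGraph

variable {V : Type} {Γ : TaitGraph V} {c₀ : Fin 3} {n : ℤ} (C : Coord Γ c₀ n)

lemma fadd : ∀ (q k : ℤ), C.f (k + q * n) = C.f k := by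
  intro q
  induction q using Int.induction_on with
  | zero => intro k; norm_num
  | succ i ih =>
    intro k
    rw [show k + ((i:ℤ)+1) * n = (k + i * n) + n by ring, C.periodic, ih]
  | pred i ih =>
    intro k
    rw [show k + (-(i:ℤ)-1) * n = (k + (-(i:ℤ)) * n) - n by ring, C.periodic', ih]

lemma fmod (j : ℤ) : C.f (j % n) = C.f j := by
  conv_rhs => rw [← Int.emod_add_mul_ediv j n]
  rw [show j % n + n * (j / n) = j % n + (j / n) * n by ring, C.fadd]

lemma shift_eq {j k : ℤ} (h : C.f j = C.f k) (t : ℤ) : C.f (j + t) = C.f (k + t) := by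
  have hn0 : 0 < n := by have := C.hn; omega
  have hjk : j % n = k % n := by
    apply C.inj _ _ (Int.emod_nonneg _ (by omega)) (Int.emod_lt_of_pos _ hn0)
      (Int.emod_nonneg _ (by omega)) (Int.emod_lt_of_pos _ hn0)
    rw [C.fmod, C.fmod, h]
  have hdvd : n ∣ (j - k) := by
    apply Int.dvd_of_emod_eq_zero
    rw [← Int.emod_eq_emod_iff_emod_sub_eq_zero]
    exact hjk
  obtain ⟨q, hq⟩ := hdvd
  have heq : j + t = (k + t) + q * n := by
    rw [show (k+t) + q*n = (k+t) + n*q by ring]; omega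
  rw [heq, C.fadd]

end Coord
end S7

/-- Let `Γ` be a 1-patch nonorientable (non-bipartite) Tait-colored
cubic graph other than the theta graph (i.e., with more than two vertices).  Then
`Γ` admits a c-compression — a compression along an orientation-reversing edge —
whose result is either a nonorientable graph or the theta graph. -/
theorem one_patch_nonorientable_admits_good_c_compression
    (V : Type) [Fintype V] (Γ : TaitGraph V)
    (hone : Γ.OnePatch) (hbip : ¬ Γ.Bipartite) (htheta : Nat.card V ≠ 2) :
    ∃ (c : Fin 3) (v : V) (Γ' : TaitGraph {w : V // w ≠ v ∧ w ≠ Γ.mat c v}),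
      Γ.OrientationReversing c v ∧ Γ.IsCompression c v Γ' ∧
      (¬ Γ'.Bipartite ∨ Nat.card {w : V // w ≠ v ∧ w ≠ Γ.mat c v} = 2) := by
  classical
  have hconn : ∀ c (x y : V), Γ.Conn c x y := fun c => conn_total Γ hone c
  have hneV : Nonempty V := nonempty_of_onePatch Γ hone
  obtain ⟨n, hncard, ⟨C0⟩⟩ := exists_coord Γ hneV (hconn 2) htheta
  have hn2 : 2 ≤ n := C0.hn
  have hev : n % 2 = 0 := C0.heven
  have hne2 : n ≠ 2 := by
    intro h
    apply htheta
    have h2 : ((Nat.card V : ℤ)) = 2 := by rw [← hncard, h]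
    exact_mod_cast h2
  -- existence of a bad (orientation-reversing) chord for color 2
  have hbad : ∃ p, 0 ≤ p ∧ p < n ∧ (p + C0.γ p) % 2 = 0 := by
    by_contra hno
    push_neg at hno
    apply hbip
    refine ⟨C0.sC, ?_⟩
    intro c v
    by_cases hc : c = 2
    · subst hc
      have hp0 := C0.pos_nonneg v
      have hp1 := C0.pos_lt v
      have hv : v = C0.f (C0.pos v) := (C0.f_pos v).symm
      have h1 : Γ.mat 2 v = C0.f (C0.γ (C0.pos v)) := by
        conv_lhs => rw [hv, C0.γ_spec]
      rw [h1, C0.sC_f _ (C0.γ_nonneg _) (C0.γ_lt _)]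
      conv_rhs => rw [hv, C0.sC_f _ hp0 hp1]
      exact decide_parity_flip (by have := hno (C0.pos v) hp0 hp1; omega)
    · exact C0.sC_alt c v hc
  obtain ⟨pb, hpb0, hpb1, hpbbad⟩ := hbad
  rcases (by omega : n = 4 ∨ 6 ≤ n) with hn4 | hn6
  · -- n = 4 : any compression is the theta graph
    have horR : Γ.OrientationReversing 2 (C0.f pb) :=
      (C0.orRev_iff (hconn 2) pb hpb0 hpb1).2 hpbbad
    have hparr := Coord.orRev_nonparallel C0 horR
    refine ⟨2, C0.f pb, cmpGraph Γ 2 (C0.f pb) hparr, horR,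
      cmp_isCompression Γ 2 (C0.f pb) hparr, Or.inr ?_⟩
    rw [card_sub _ _ (fun h => Γ.nofix 2 (C0.f pb) h.symm)]
    have h4' : (Nat.card V : ℤ) = 4 := by rw [← hncard, hn4]
    have h4 : Nat.card V = 4 := by exact_mod_cast h4'
    omega
  -- main case : n ≥ 6
  by_contra hgoal
  have hbipC : ∀ (CC : Coord Γ 2 n) (p : ℤ) (h0 : 0 ≤ p) (h1 : p < n)
      (hb : (p + CC.γ p) % 2 = 0)
      (hparp : ∀ c', c' ≠ 2 → Γ.mat c' (CC.f p) ≠ Γ.mat 2 (CC.f p)),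
      ∃ σ : {w : V // w ≠ CC.f p ∧ w ≠ Γ.mat 2 (CC.f p)} → Bool,
        ∀ c w, σ ((cmpGraph Γ 2 (CC.f p) hparp).mat c w) = ! σ w := by
    intro CC p h0 h1 hb hparp
    have horR := (CC.orRev_iff (hconn 2) p h0 h1).2 hb
    by_contra hnb
    apply hgoal
    exact ⟨2, CC.f p, cmpGraph Γ 2 (CC.f p) hparp, horR,
      cmp_isCompression Γ 2 (CC.f p) hparp, Or.inl hnb⟩
  have HD : ∀ (CC : Coord Γ 2 n) (x y : ℤ), 0 ≤ x → x < y → y < n → (x + y) % 2 = 0 →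
      CC.γ x = y → ∀ p q, 0 ≤ p → p < q → q < n → p ≠ x → p ≠ y → q ≠ x → q ≠ y →
      CC.γ p = q → ((p + q) % 2 = 0 ↔ Cross x y p q) := by
    intro CC x y hx0 hxy hyn hbxy hgx p q hp0 hpq hqn hpx hpy hqx hqy hgp
    have hparr : ∀ c', c' ≠ 2 → Γ.mat c' (CC.f x) ≠ Γ.mat 2 (CC.f x) :=
      Coord.orRev_nonparallel CC
        ((CC.orRev_iff (hconn 2) x hx0 (by omega)).2 (by rw [hgx]; exact hbxy))
    obtain ⟨σ, hσ⟩ := hbipC CC x hx0 (by omega) (by rw [hgx]; exact hbxy) hparr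
    exact keyD CC hn6 x y hx0 hxy hyn hbxy (by rw [CC.γ_spec, hgx]) hparr σ hσ
      p q hp0 hpq hqn hpx hpy hqx hqy (by rw [CC.γ_spec, hgp])
  by_cases hall : ∀ p, 0 ≤ p → p < n → (p + C0.γ p) % 2 = 0
  · -- CASE I : all chords are orientation-reversing; then every chord has span n/2
    have hcount : ∀ x y, 0 ≤ x → x < y → y < n → C0.γ x = y → 2 * (y - x) = n := by
      intro x y hx0 hxy hyn hgx
      have hgy : C0.γ y = x := by rw [← hgx, C0.γ_invol x hx0 (by omega)]
      have hbadx : (x + y) % 2 = 0 := by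
        have := hall x hx0 (by omega); rw [hgx] at this; exact this
      have hone1 : ∀ k, 0 ≤ k → k < n → k ≠ x → k ≠ y →
          (C0.γ k ≠ x ∧ C0.γ k ≠ y) ∧ ((x < k ∧ k < y) ↔ ¬(x < C0.γ k ∧ C0.γ k < y)) := by
        intro k h0 h1 hkx hky
        have hl0 := C0.γ_nonneg k
        have hl1 := C0.γ_lt k
        have hlk := C0.γ_ne k h0 h1
        have hgl : C0.γ (C0.γ k) = k := C0.γ_invol k h0 h1
        have hlx : C0.γ k ≠ x := by
          intro h; apply hky; rw [← hgl, h, hgx]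
        have hly : C0.γ k ≠ y := by
          intro h; apply hkx; rw [← hgl, h, hgy]
        refine ⟨⟨hlx, hly⟩, ?_⟩
        have hbadk := hall k h0 h1
        rcases lt_or_gt_of_ne hlk with hlt | hgt
        · have hiff := HD C0 x y hx0 hxy hyn hbadx hgx
            (C0.γ k) k hl0 hlt h1 hlx hly hkx hky hgl
          have hcross := hiff.1 (by omega)
          unfold Cross at hcross
          omega
        · have hiff := HD C0 x y hx0 hxy hyn hbadx hgx
            k (C0.γ k) h0 hgt hl1 hkx hky hlx hly rfl
          have hcross := hiff.1 (by omega)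
          unfold Cross at hcross
          omega
      have hγinj : ∀ a b, 0 ≤ a → a < n → 0 ≤ b → b < n → C0.γ a = C0.γ b → a = b := by
        intro a b ha0 ha1 hb0 hb1 h
        rw [← C0.γ_invol a ha0 ha1, h, C0.γ_invol b hb0 hb1]
      have hmem1 : ∀ k ∈ Finset.Ioo x y, C0.γ k ∈ Finset.Ico 0 x ∪ Finset.Ioo y n := by
        intro k hk
        rw [Finset.mem_Ioo] at hk
        obtain ⟨⟨hlx, hly⟩, hiff⟩ := hone1 k (by omega) (by omega) (by omega) (by omega)
        have hnin := hiff.1 ⟨hk.1, hk.2⟩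
        have hl0 := C0.γ_nonneg k
        have hl1 := C0.γ_lt k
        rw [Finset.mem_union, Finset.mem_Ico, Finset.mem_Ioo]
        omega
      have hmem2 : ∀ k ∈ Finset.Ico 0 x ∪ Finset.Ioo y n, C0.γ k ∈ Finset.Ioo x y := by
        intro k hk
        rw [Finset.mem_union, Finset.mem_Ico, Finset.mem_Ioo] at hk
        obtain ⟨⟨hlx, hly⟩, hiff⟩ := hone1 k (by omega) (by omega) (by omega) (by omega)
        have hl0 := C0.γ_nonneg k
        have hl1 := C0.γ_lt k
        rw [Finset.mem_Ioo]
        have : ¬ (x < k ∧ k < y) := by omega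
        have h2 : x < C0.γ k ∧ C0.γ k < y := by
          by_contra h3
          exact this (hiff.2 h3)
        exact h2
      have hc1 : (Finset.Ioo x y).card ≤ (Finset.Ico 0 x ∪ Finset.Ioo y n).card := by
        apply Finset.card_le_card_of_injOn C0.γ hmem1
        intro a ha b hb h
        rw [Finset.coe_Ioo, Set.mem_Ioo] at ha hb
        exact hγinj a b (by omega) (by omega) (by omega) (by omega) h
      have hc2 : (Finset.Ico 0 x ∪ Finset.Ioo y n).card ≤ (Finset.Ioo x y).card := by
        apply Finset.card_le_card_of_injOn C0.γ hmem2
        intro a ha b hb h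
        rw [Finset.coe_union, Set.mem_union, Finset.coe_Ico, Finset.coe_Ioo,
          Set.mem_Ico, Set.mem_Ioo] at ha hb
        exact hγinj a b (by omega) (by omega) (by omega) (by omega) h
      have hdisj : Disjoint (Finset.Ico (0:ℤ) x) (Finset.Ioo y n) := by
        rw [Finset.disjoint_left]
        intro a ha hb
        rw [Finset.mem_Ico] at ha
        rw [Finset.mem_Ioo] at hb
        omega
      rw [Finset.card_union_of_disjoint hdisj] at hc1 hc2
      rw [Int.card_Ioo] at hc1 hc2
      rw [Int.card_Ico, Int.card_Ioo] at hc1 hc2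
      omega
    have hg00 : 0 < C0.γ 0 := by
      have := C0.γ_nonneg 0
      have := C0.γ_ne 0 (by omega) (by omega)
      omega
    have hg0 : C0.γ 0 = n / 2 := by
      have := hcount 0 (C0.γ 0) (by omega) hg00 (C0.γ_lt 0) rfl
      omega
    have hg1lt : 1 < C0.γ 1 := by
      have h0 := C0.γ_nonneg 1
      have h1 := C0.γ_ne 1 (by omega) (by omega)
      rcases (by omega : C0.γ 1 = 0 ∨ 1 < C0.γ 1) with h | h
      · exfalso
        have h2 : C0.γ 0 = 1 := by rw [← h, C0.γ_invol 1 (by omega) (by omega)]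
        have := hcount 0 1 (by omega) (by omega) (by omega) h2
        omega
      · exact h
    have hg1 : C0.γ 1 = 1 + n / 2 := by
      have := hcount 1 (C0.γ 1) (by omega) hg1lt (C0.γ_lt 1) rfl
      omega
    set n2 : ℤ := n / 2 with hn2def
    have hn2e : n2 % 2 = 0 := by
      have := hall 0 (by omega) (by omega)
      rw [hg0] at this
      omega
    have hn8 : 8 ≤ n := by omega
    have hγn2 : C0.γ n2 = 0 := by
      have := C0.γ_invol 0 (by omega) (by omega)
      rw [hg0] at this
      exact this
    have hγn21 : C0.γ (n2+1) = 1 := by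
      have := C0.γ_invol 1 (by omega) (by omega)
      rw [hg1] at this
      rw [show n2 + 1 = 1 + n2 by ring]
      exact this
    have hstep0 : Γ.mat 2 (C0.f 0) = C0.f n2 := by rw [C0.γ_spec, hg0]
    have hstep1 : Γ.mat 2 (C0.f 1) = C0.f (n2+1) := by
      rw [C0.γ_spec, hg1]
      congr 1
      ring
    have hstepn2 : Γ.mat 2 (C0.f n2) = C0.f 0 := by rw [C0.γ_spec, hγn2]
    have hstepn21 : Γ.mat 2 (C0.f (n2+1)) = C0.f 1 := by rw [C0.γ_spec, hγn21]
    have hA0 : Γ.mat C0.a (C0.f 0) = C0.f 1 := by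
      have := C0.stepA 0 (by norm_num)
      norm_num at this
      exact this
    have hA1 : Γ.mat C0.a (C0.f 1) = C0.f 0 := by rw [← hA0, Γ.invol]
    have hAn2 : Γ.mat C0.a (C0.f n2) = C0.f (n2+1) := C0.stepA n2 hn2e
    have hAn21 : Γ.mat C0.a (C0.f (n2+1)) = C0.f n2 := by rw [← hAn2, Γ.invol]
    have hcl : ∀ z, Γ.Conn C0.b (C0.f 0) z →
        z = C0.f 0 ∨ z = C0.f 1 ∨ z = C0.f n2 ∨ z = C0.f (n2+1) := by
      intro z hz
      induction hz with
      | refl => exact Or.inl rfl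
      | @tail pz qz hp step ih =>
        obtain ⟨c', hc', hstep⟩ := step
        have hc2 : c' = C0.a ∨ c' = 2 :=
          fin3_cases C0.a 2 C0.b c' C0.hab (Ne.symm C0.hb) C0.ha hc'
        rcases ih with h | h | h | h <;> rcases hc2 with rfl | rfl <;> rw [← hstep, h]
        · exact Or.inr (Or.inl hA0)
        · exact Or.inr (Or.inr (Or.inl hstep0))
        · exact Or.inl hA1
        · exact Or.inr (Or.inr (Or.inr hstep1))
        · exact Or.inr (Or.inr (Or.inr hAn2))
        · exact Or.inl hstepn2
        · exact Or.inr (Or.inr (Or.inl hAn21))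
        · exact Or.inr (Or.inl hstepn21)
    have hin := hcl (C0.f 2) (hconn C0.b (C0.f 0) (C0.f 2))
    rcases hin with h | h | h | h
    · have := C0.inj 2 0 (by omega) (by omega) (by omega) (by omega) h
      omega
    · have := C0.inj 2 1 (by omega) (by omega) (by omega) (by omega) h
      omega
    · have := C0.inj 2 n2 (by omega) (by omega) (by omega) (by omega) h
      omega
    · have := C0.inj 2 (n2+1) (by omega) (by omega) (by omega) (by omega) h
      omega
  · -- CASE II : there is a good chord; find a boundary mark and rotate
    push_neg at hall
    obtain ⟨p₀, hp00, hp01, hp0good⟩ := hall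
    have hbound : ∃ m, 0 ≤ m ∧ m < n ∧ (m + C0.γ m) % 2 = 0 ∧
        ¬ Γ.OrientationReversing 2 (C0.f (m+1)) := by
      by_contra hno
      push_neg at hno
      have hstep2 : ∀ d : ℕ, Γ.OrientationReversing 2 (C0.f (pb + d)) := by
        intro d
        induction d with
        | zero =>
          have := (C0.orRev_iff (hconn 2) pb hpb0 hpb1).2 hpbbad
          simpa using this
        | succ d ih =>
          have hk0 := C0.pos_nonneg (C0.f (pb + d))
          have hk1 := C0.pos_lt (C0.f (pb + d))
          have hfk : C0.f (C0.pos (C0.f (pb + d))) = C0.f (pb + d) := C0.f_pos _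
          have hbadk : (C0.pos (C0.f (pb + d)) + C0.γ (C0.pos (C0.f (pb + d)))) % 2 = 0 := by
            apply (C0.orRev_iff (hconn 2) _ hk0 hk1).1
            rw [hfk]
            exact ih
          have hOR := hno _ hk0 hk1 hbadk
          have heq : C0.f (C0.pos (C0.f (pb + d)) + 1) = C0.f (pb + d + 1) :=
            C0.shift_eq hfk 1
          rw [heq] at hOR
          have hcast : pb + ((d+1 : ℕ) : ℤ) = pb + d + 1 := by push_cast; ring
          rw [hcast]
          exact hOR
      have hOR0 : Γ.OrientationReversing 2 (C0.f p₀) := by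
        have h := hstep2 ((p₀ - pb + n).toNat)
        have heq : C0.f (pb + ((p₀ - pb + n).toNat : ℤ)) = C0.f p₀ := by
          rw [show pb + ((p₀ - pb + n).toNat : ℤ) = p₀ + n by omega, C0.periodic]
        rwa [heq] at h
      exact hp0good ((C0.orRev_iff (hconn 2) p₀ hp00 hp01).1 hOR0)
    obtain ⟨m, hm0, hm1, hmbad, hmgood⟩ := hbound
    set C1 : Coord Γ 2 n := C0.rot (m+1) (by omega) (by omega) with hC1
    have hf1 : ∀ k, C1.f k = C0.f (k + (m+1)) := fun k => rfl
    have hbad1n : (n - 1 + C1.γ (n-1)) % 2 = 0 := by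
      apply (C1.orRev_iff (hconn 2) (n-1) (by omega) (by omega)).1
      have heq : C1.f (n-1) = C0.f m := by
        rw [hf1, show n - 1 + (m+1) = m + n by ring, C0.periodic]
      rw [heq]
      exact (C0.orRev_iff (hconn 2) m hm0 hm1).2 hmbad
    have hgood0 : ¬ (0 + C1.γ 0) % 2 = 0 := by
      intro hcon
      apply hmgood
      have heq : C1.f 0 = C0.f (m+1) := by rw [hf1]; norm_num
      rw [← heq]
      exact (C1.orRev_iff (hconn 2) 0 (by omega) (by omega)).2 hcon
    -- least bad position
    set W : Finset ℤ := (Finset.Ico (0:ℤ) n).filter (fun k => (k + C1.γ k) % 2 = 0) with hW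
    have hWn1 : (n-1) ∈ W := by
      rw [hW, Finset.mem_filter, Finset.mem_Ico]
      exact ⟨⟨by omega, by omega⟩, hbad1n⟩
    have hWne : W.Nonempty := ⟨n-1, hWn1⟩
    set L : ℤ := W.min' hWne with hL
    have hLmem : L ∈ W := W.min'_mem hWne
    have hLb : 0 ≤ L ∧ L < n ∧ (L + C1.γ L) % 2 = 0 := by
      have := hLmem
      rw [hW, Finset.mem_filter, Finset.mem_Ico] at this
      exact ⟨this.1.1, this.1.2, this.2⟩
    have hLmin : ∀ k, 0 ≤ k → k < n → (k + C1.γ k) % 2 = 0 → L ≤ k := by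
      intro k h0 h1 hb
      apply W.min'_le
      rw [hW, Finset.mem_filter, Finset.mem_Ico]
      exact ⟨⟨h0, h1⟩, hb⟩
    have hL1 : 1 ≤ L := by
      rcases (by omega : L = 0 ∨ 1 ≤ L ∨ L < 0) with h | h | h
      · exact absurd (by rw [h] at hLb; exact hLb.2.2) hgood0
      · exact h
      · exfalso; exact absurd hLb.1 (by omega)
    have hLn1 : L ≤ n - 1 := by omega
    have hnotbad : ∀ k, 0 ≤ k → k < L → ¬ (k + C1.γ k) % 2 = 0 := by
      intro k h0 h1 hb
      have := hLmin k h0 (by omega) hb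
      omega
    -- the interval [0, L) is closed under the chord map
    have hA : ∀ p, 0 ≤ p → p < L → C1.γ p < L := by
      intro p h0 h1
      have hq0 := C1.γ_nonneg p
      have hq1 := C1.γ_lt p
      by_contra hqL
      push_neg at hqL
      have hpgood : ¬ (p + C1.γ p) % 2 = 0 := hnotbad p h0 h1
      have hγγ : C1.γ (C1.γ p) = p := C1.γ_invol p h0 (by omega)
      have hqgood : ¬ (C1.γ p + C1.γ (C1.γ p)) % 2 = 0 := by
        rw [hγγ]; omega
      have hqn1 : C1.γ p ≠ n - 1 := by
        intro h; apply hqgood; rw [h]; exact hbad1n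
      have hqL' : L < C1.γ p := by
        rcases (by omega : L = C1.γ p ∨ L < C1.γ p) with h | h
        · exfalso; apply hqgood; rw [← h]; exact hLb.2.2
        · exact h
      have hpq : p < C1.γ p := by omega
      have hzb := hLb.2.2
      have hz0 := C1.γ_nonneg L
      have hz1 := C1.γ_lt L
      have hzL : L < C1.γ L := by
        rcases (by omega : C1.γ L < L ∨ C1.γ L = L ∨ L < C1.γ L) with h | h | h
        · exfalso
          have hbadz : (C1.γ L + C1.γ (C1.γ L)) % 2 = 0 := by
            rw [C1.γ_invol L hLb.1 hLb.2.1]; omega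
          exact absurd (hLmin _ hz0 hz1 hbadz) (by omega)
        · exact absurd h (C1.γ_ne L hLb.1 hLb.2.1)
        · exact h
      by_cases hzn : C1.γ L = n - 1
      · have hiff := HD C1 L (n-1) hLb.1 (by omega) (by omega)
          (by rw [← hzn]; exact hzb) hzn
          p (C1.γ p) h0 hpq (by omega) (by omega) (by omega) (by omega) hqn1 rfl
        apply hpgood
        apply hiff.2
        unfold Cross
        omega
      · set w : ℤ := C1.γ (n-1) with hwdef
        have hw0 := C1.γ_nonneg (n-1)
        have hw1 : w < n - 1 := by
          have := C1.γ_lt (n-1)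
          have := C1.γ_ne (n-1) (by omega) (by omega)
          omega
        have hwbad : (w + C1.γ w) % 2 = 0 := by
          rw [hwdef, C1.γ_invol (n-1) (by omega) (by omega)]
          omega
        have hwL : L < w := by
          have hge := hLmin w hw0 (by omega) hwbad
          rcases (by omega : L = w ∨ L < w) with h | h
          · exfalso
            apply hzn
            rw [h, hwdef, C1.γ_invol (n-1) (by omega) (by omega)]
          · exact h
        have hγw : C1.γ w = n - 1 := by
          rw [hwdef, C1.γ_invol (n-1) (by omega) (by omega)]
        have hwz : w ≠ C1.γ L := by
          intro h
          have h2 : C1.γ w = L := by rw [h, C1.γ_invol L hLb.1 hLb.2.1]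
          rw [hγw] at h2
          omega
        have h1' := HD C1 L (C1.γ L) hLb.1 hzL hz1 hzb rfl
          w (n-1) hw0 hw1 (by omega) (by omega) hwz (by omega) (Ne.symm hzn) hγw
        have hwz2 : w < C1.γ L ∧ C1.γ L < n - 1 := by
          have hcross := h1'.1 (by omega)
          unfold Cross at hcross
          omega
        have h2' := HD C1 L (C1.γ L) hLb.1 hzL hz1 hzb rfl
          p (C1.γ p) h0 hpq (by omega) (by omega)
          (by intro h; apply hpgood; rw [h, C1.γ_invol L hLb.1 hLb.2.1]; omega)
          (by omega)
          (by intro h; apply hqgood; rw [h, C1.γ_invol L hLb.1 hLb.2.1]; omega) rfl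
        have hqz : C1.γ L < C1.γ p := by
          have hnc : ¬ Cross L (C1.γ L) p (C1.γ p) := by
            intro hc
            exact hpgood (h2'.2 hc)
          unfold Cross at hnc
          have hne' : C1.γ p ≠ C1.γ L := by
            intro h; apply hqgood; rw [h, C1.γ_invol L hLb.1 hLb.2.1]; omega
          omega
        have h3' := HD C1 w (n-1) hw0 hw1 (by omega)
          (by omega) hγw
          p (C1.γ p) h0 hpq (by omega) (by omega) (by omega)
          (by omega) hqn1 rfl
        apply hpgood
        apply h3'.2
        unfold Cross
        omega
    -- L is even
    have hLeven : L % 2 = 0 := by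
      have hinv := even_card_of_involution C1.γ (Finset.Ico 0 L)
        (by
          intro k hk
          rw [Finset.mem_Ico] at hk ⊢
          exact ⟨C1.γ_nonneg k, hA k hk.1 hk.2⟩)
        (by
          intro k hk
          rw [Finset.mem_Ico] at hk
          exact C1.γ_invol k hk.1 (by omega))
        (by
          intro k hk
          rw [Finset.mem_Ico] at hk
          exact C1.γ_ne k hk.1 (by omega))
      rw [Int.card_Ico] at hinv
      rw [Nat.even_iff] at hinv
      omega
    -- the interval [0, L) is closed under colors a and 2, contradicting 1-patchness
    have hcl2 : ∀ z, Γ.Conn C1.b (C1.f 0) z → ∃ k, 0 ≤ k ∧ k < L ∧ C1.f k = z := by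
      intro z hz
      induction hz with
      | refl => exact ⟨0, le_refl 0, by omega, rfl⟩
      | @tail pz qz hp step ih =>
        obtain ⟨k, hk0, hk1, hkeq⟩ := ih
        obtain ⟨c', hc', hstep⟩ := step
        have hc2 : c' = C1.a ∨ c' = 2 :=
          fin3_cases C1.a 2 C1.b c' C1.hab (Ne.symm C1.hb) C1.ha hc'
        rcases hc2 with rfl | rfl
        · by_cases hk : k % 2 = 0
          · refine ⟨k+1, by omega, by omega, ?_⟩
            rw [← hstep, ← hkeq]
            exact (C1.stepA k hk).symm
          · refine ⟨k-1, by omega, by omega, ?_⟩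
            rw [← hstep, ← hkeq]
            have := C1.stepA (k-1) (by omega)
            rw [show k-1+1 = k by ring] at this
            rw [← this, Γ.invol]
        · refine ⟨C1.γ k, C1.γ_nonneg k, hA k hk0 hk1, ?_⟩
          rw [← hstep, ← hkeq, C1.γ_spec]
    obtain ⟨k, hk0, hk1, hkeq⟩ := hcl2 (C1.f L) (hconn C1.b (C1.f 0) (C1.f L))
    have := C1.inj k L hk0 (by omega) hLb.1 hLb.2.1 hkeq
    omega
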